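/- arXiv:1912.00163 — 4 statements merged into one kernel-verified Lean document; each statement's English description precedes it below -/
import Mathlib

section
/- Let K ≥ 2, a ∈ ℝ^K with all a_k > 0 and Σ a_k = 1, and A[k][l] = δ_{kl} - a_k. Suppose π ∈ ℝ^K satisfies A π = b, π_k ≥ 0 for all k, and π_{k₀} = 0 for some k₀. Then π is the unique vector in ℝ^K with these three properties (nonnegative, some zero coordinate, solving Aπ = b). -/
theorem unique_nonneg_solution_with_zero_coord (K : ℕ) (hK : 2 ≤ K)
    (a : Fin K → ℝ) (ha : ∀ k, 0 < a k) (hsum : ∑ k : Fin K, a k = 1)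
    (b π : Fin K → ℝ)
    (hπ : (Matrix.of fun k l : Fin K => (if k = l then (1 : ℝ) else 0) - a k).mulVec π = b)
    (hπnn : ∀ k, 0 ≤ π k) (k₀ : Fin K) (hk₀ : π k₀ = 0) :
    ∀ π' : Fin K → ℝ,
      (Matrix.of fun k l : Fin K => (if k = l then (1 : ℝ) else 0) - a k).mulVec π' = b →
      (∀ k, 0 ≤ π' k) → (∃ k₁, π' k₁ = 0) → π' = π := by
  intro π' hπ' hπ'nn hex
  obtain ⟨k₁, hk₁⟩ := hex
  have hA : ∀ (x : Fin K → ℝ) (k : Fin K),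
      (Matrix.of fun k l : Fin K => (if k = l then (1 : ℝ) else 0) - a k).mulVec x k
        = x k - a k * ∑ l, x l := by
    intro x k
    simp only [Matrix.mulVec, dotProduct, Matrix.of_apply, sub_mul,
      Finset.sum_sub_distrib, ite_mul, one_mul, zero_mul, ← Finset.mul_sum,
      Finset.sum_ite_eq, Finset.mem_univ, if_true]
  set c : ℝ := (∑ l, π' l) - (∑ l, π l) with hc
  have key : ∀ k, π' k = π k + a k * c := by
    intro k
    have h1 : π k - a k * ∑ l, π l = b k := by rw [← hA π k, hπ]
    have h2 : π' k - a k * ∑ l, π' l = b k := by rw [← hA π' k, hπ']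
    have := h1.trans h2.symm
    simp only [hc]
    nlinarith [this]
  have hc0 : c = 0 := by
    rcases lt_trichotomy c 0 with h | h | h
    · have := key k₀
      have : π' k₀ < 0 := by
        rw [this, hk₀]
        nlinarith [ha k₀]
      exact absurd (hπ'nn k₀) (not_le.mpr this)
    · exact h
    · have := key k₁
      have : 0 < π' k₁ := by
        rw [this]
        nlinarith [ha k₁, hπnn k₁]
      exact absurd hk₁ (ne_of_gt this)
  funext k
  rw [key k, hc0]
  ring
end

section
/- Let X be a discrete random variable on a finite set C, P a probability distribution on C, and for each α ∈ C let P_α be the point mass at α (the distribution of X under do(X=α)). Suppose P_mix = π_φ P + Σ_{α∈C} π_α P_α with π_φ + Σ π_α = 1, all weights nonnegative, and there exists α₀ ∈ C with π_{α₀} = 0. If additionally P(β) > 0 for all β ∈ C, then the weights (π_α)_{α∈C} are uniquely determined by P and P_mix. -/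
theorem single_variable_mixture_identifiable (C : Type) [Fintype C]
    (P : C → ℝ) (hPpos : ∀ β, 0 < P β) (hPsum : ∑ β : C, P β = 1)
    (π π' : C → ℝ) (πφ πφ' : ℝ)
    (hφ : 0 ≤ πφ) (hπ : ∀ α, 0 ≤ π α) (htot : πφ + ∑ α : C, π α = 1)
    (hzero : ∃ α₀, π α₀ = 0)
    (hφ' : 0 ≤ πφ') (hπ' : ∀ α, 0 ≤ π' α) (htot' : πφ' + ∑ α : C, π' α = 1)
    (hzero' : ∃ α₀, π' α₀ = 0)
    (hmix : ∀ β : C, πφ * P β + π β = πφ' * P β + π' β) :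
    π = π' := by
  obtain ⟨a, ha⟩ := hzero
  obtain ⟨b, hb⟩ := hzero'
  have h1 := hmix a
  have h2 := hmix b
  have hd : πφ = πφ' := by
    nlinarith [hπ' a, hπ b, hPpos a, hPpos b, mul_pos (hPpos a) (hPpos b)]
  funext β
  have h3 := hmix β
  rw [hd] at h3; linarith
end

section
/- Let K ≥ 2, a ∈ ℝ^K with a_k > 0 and Σ a_k = 1, A[k][l] = δ_{kl} - a_k, and b = A π for a probability-subvector π (π_k ≥ 0, Σ π_k ≤ 1, some π_{k₀} = 0). Then the algorithm that computes, for each k ∈ [K], the unique point p_k of the solution line of Ax = b with k-th coordinate zero, and outputs any p_k lying in the nonnegative orthant, returns exactly π. -/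
theorem identifiability_algorithm_correct (K : ℕ) (hK : 2 ≤ K)
    (a π : Fin K → ℝ)
    (ha : ∀ k, 0 < a k) (hsum : ∑ k : Fin K, a k = 1)
    (hπ : ∀ k, 0 ≤ π k) (hπs : ∑ k : Fin K, π k ≤ 1)
    (k₀ : Fin K) (hk₀ : π k₀ = 0) :
    (∀ k : Fin K, (π - (π k / a k) • a) k = 0) ∧
    (∀ l, 0 ≤ (π - (π k₀ / a k₀) • a) l) ∧
    (∀ k : Fin K, (∀ l, 0 ≤ (π - (π k / a k) • a) l) → π - (π k / a k) • a = π) := by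
  refine ⟨fun k => ?_, fun l => ?_, fun k hk => ?_⟩
  · simp only [Pi.sub_apply, Pi.smul_apply, smul_eq_mul]
    rw [div_mul_cancel₀ _ (ha k).ne', sub_self]
  · simp [hk₀, hπ l]
  · have h0 := hk k₀
    simp only [Pi.sub_apply, Pi.smul_apply, smul_eq_mul, hk₀] at h0
    have hc : 0 ≤ π k / a k := div_nonneg (hπ k) (ha k).le
    have : π k / a k = 0 := by nlinarith [ha k₀]
    simp [this]
end

section
/- Let P be a probability distribution on a finite product Π_i C_i that is Markov relative to a DAG G, and let P_{x_S} be defined by the truncated factorization P_{x_S}(y) = Π_{i∉S} P(y_i | pa_i) for y consistent with X_S = x_S (and 0 otherwise). Then P_{x_S} is a probability distribution (its values sum to 1). -/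
open scoped Classical in
theorem trunc_aux
    (n : ℕ) (C : Fin n → Type) [∀ i, Fintype (C i)] [∀ i, DecidableEq (C i)]
    (par : Fin n → Finset (Fin n))
    (hpar : ∀ i : Fin n, ∀ j ∈ par i, j < i)
    (cond : ∀ i : Fin n, (∀ j, C j) → C i → ℝ)
    (hloc : ∀ i : Fin n, ∀ y y' : ∀ j, C j,
      (∀ j ∈ par i, y j = y' j) → cond i y = cond i y')
    (hsum : ∀ i y, ∑ β : C i, cond i y β = 1)
    (U : Finset (Fin n)) :
    ∀ y₀ : ∀ j, C j,
      ∑ y : ∀ j, C j, (if ∀ j, j ∉ U → y j = y₀ j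
        then ∏ i ∈ U, cond i y (y i) else 0) = 1 := by
  induction U using Finset.strongInduction with
  | _ U IH =>
    intro y₀
    rcases U.eq_empty_or_nonempty with rfl | hU
    · have : ∀ y : ∀ j, C j,
        (if ∀ j, j ∉ (∅ : Finset (Fin n)) → y j = y₀ j
          then ∏ i ∈ (∅ : Finset (Fin n)), cond i y (y i) else 0)
        = if y = y₀ then 1 else 0 := by
        intro y
        simp [funext_iff]
      rw [Finset.sum_congr rfl (fun y _ => this y)]
      simp
    · set i := U.max' hU with hi
      have hiU : i ∈ U := U.max'_mem hU
      have key : ∑ y : ∀ j, C j, (if ∀ j, j ∉ U → y j = y₀ j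
            then ∏ j ∈ U, cond j y (y j) else 0)
          = ∑ q ∈ (Finset.univ.filter
              (fun y : ∀ j, C j => ∀ j, j ∉ U.erase i → y j = y₀ j)) ×ˢ
              (Finset.univ : Finset (C i)),
              cond i q.1 q.2 * ∏ j ∈ U.erase i, cond j q.1 (q.1 j) := by
        rw [← Finset.sum_filter]
        refine Finset.sum_bij' (fun y _ => (Function.update y i (y₀ i), y i))
          (fun q _ => Function.update q.1 i q.2) ?_ ?_ ?_ ?_ ?_
        · intro y hy
          rw [Finset.mem_filter] at hy
          simp only [Finset.mem_product, Finset.mem_filter, Finset.mem_univ, true_and,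
            and_true]
          intro j hj
          by_cases hji : j = i
          · subst hji; simp
          · rw [Function.update_of_ne hji]
            exact hy.2 j (fun hjU => hj (Finset.mem_erase.2 ⟨hji, hjU⟩))
        · intro q hq
          rw [Finset.mem_product, Finset.mem_filter] at hq
          rw [Finset.mem_filter]
          refine ⟨Finset.mem_univ _, fun j hj => ?_⟩
          have hji : j ≠ i := fun h => hj (h ▸ hiU)
          show Function.update q.1 i q.2 j = y₀ j
          rw [Function.update_of_ne hji]
          exact hq.1.2 j (fun h => hj (Finset.mem_of_mem_erase h))
        · intro y hy
          simp [Function.update_idem, Function.update_eq_self]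
        · intro q hq
          rw [Finset.mem_product, Finset.mem_filter] at hq
          have hqi : q.1 i = y₀ i := hq.1.2 i (Finset.notMem_erase i U)
          ext j
          · by_cases hji : j = i
            · subst hji; simp [Function.update_idem, hqi]
            · simp [Function.update_of_ne hji]
          · simp
        · intro y hy
          have hupdate : ∀ j ∈ U.erase i,
              cond j (Function.update y i (y₀ i)) ((Function.update y i (y₀ i)) j)
              = cond j y (y j) := by
            intro j hj
            have hji : j ≠ i := (Finset.mem_erase.1 hj).1
            have hjlt : j < i := lt_of_le_of_ne (U.le_max' j (Finset.mem_of_mem_erase hj)) hji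
            rw [Function.update_of_ne hji]
            refine congrFun (hloc j _ y fun k hk => ?_) (y j)
            have : k ≠ i := ne_of_lt (lt_trans (hpar j k hk) hjlt)
            rw [Function.update_of_ne this]
          have hci : cond i (Function.update y i (y₀ i)) (y i) = cond i y (y i) := by
            refine congrFun (hloc i _ y fun k hk => ?_) (y i)
            have : k ≠ i := ne_of_lt (hpar i k hk)
            rw [Function.update_of_ne this]
          simp only
          rw [hci, Finset.prod_congr rfl hupdate]
          exact (Finset.mul_prod_erase _ _ hiU).symm
      rw [key, Finset.sum_product]
      have : ∀ y ∈ Finset.univ.filter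
          (fun y : ∀ j, C j => ∀ j, j ∉ U.erase i → y j = y₀ j),
          ∑ β : C i, cond i y β * ∏ j ∈ U.erase i, cond j y (y j)
          = ∏ j ∈ U.erase i, cond j y (y j) := by
        intro y _
        rw [← Finset.sum_mul, hsum, one_mul]
      rw [Finset.sum_congr rfl this, Finset.sum_filter]
      exact IH (U.erase i) (Finset.erase_ssubset hiU) y₀

open scoped Classical in
theorem truncated_factorization_is_distribution
    (n : ℕ) (C : Fin n → Type) [∀ i, Fintype (C i)] [∀ i, DecidableEq (C i)]
    (par : Fin n → Finset (Fin n))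
    (hpar : ∀ i : Fin n, ∀ j ∈ par i, j < i)
    (cond : ∀ i : Fin n, (∀ j, C j) → C i → ℝ)
    (hloc : ∀ i : Fin n, ∀ y y' : ∀ j, C j,
      (∀ j ∈ par i, y j = y' j) → cond i y = cond i y')
    (hnn : ∀ i y β, 0 ≤ cond i y β)
    (hsum : ∀ i y, ∑ β : C i, cond i y β = 1)
    (P : (∀ j, C j) → ℝ)
    (hP : ∀ y, P y = ∏ i : Fin n, cond i y (y i))
    (S : Finset (Fin n)) (xS : ∀ j, C j)
    (Pint : (∀ j, C j) → ℝ)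
    (hPint : ∀ y, Pint y
      = if (∀ s ∈ S, y s = xS s)
          then ∏ i ∈ Finset.univ \ S, cond i y (y i) else 0) :
    ∑ y : ∀ j, C j, Pint y = 1 := by
  have h := trunc_aux n C par hpar cond hloc hsum (Finset.univ \ S) xS
  rw [← h]
  refine Finset.sum_congr rfl fun y _ => ?_
  rw [hPint y]
  congr 1
  simp only [eq_iff_iff, Finset.mem_sdiff, Finset.mem_univ, true_and, not_not]
end
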